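/- Let μ be a doubling measure on a metric space X with doubling constant C_d, and let V ≥ 0 be locally integrable such that the measure V dμ is doubling with constant C_V, i.e. ∫_{B(x,2r)} V dμ ≤ C_V ∫_{B(x,r)} V dμ. Fix x ∈ X and ρ > 0 satisfying (ρ²/μ(B(x,ρ))) ∫_{B(x,ρ)} V dμ ≤ C₀. Then for every r ≥ ρ, (r²/μ(B(x,r))) ∫_{B(x,r)} V dμ ≤ 4 C_V C₀ (r/ρ)^{k₁} with k₁ = 2 + log₂ C_V. -/

import Mathlib

open MeasureTheory Metric

theorem stmt1 {X : Type*} [MetricSpace X] [MeasurableSpace X] (μ : Measure X)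
    (C_d : ℝ) (hCd : 0 < C_d)
    (hdoub : ∀ x : X, ∀ r : ℝ, 0 < r →
      (μ (ball x (2 * r))).toReal ≤ C_d * (μ (ball x r)).toReal)
    (V : X → ℝ) (hV : ∀ x, 0 ≤ V x) (hVloc : ∀ x : X, ∀ r : ℝ, 0 < r →
      IntegrableOn V (ball x r) μ)
    (C_V C₀ : ℝ) (hCV : 1 ≤ C_V) (hC₀ : 0 ≤ C₀)
    (hVdoub : ∀ x : X, ∀ r : ℝ, 0 < r →
      ∫ y in ball x (2 * r), V y ∂μ ≤ C_V * ∫ y in ball x r, V y ∂μ)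
    (x : X) (ρ : ℝ) (hρ : 0 < ρ)
    (hmass : ρ ^ 2 / (μ (ball x ρ)).toReal * ∫ y in ball x ρ, V y ∂μ ≤ C₀) :
    ∀ r : ℝ, ρ ≤ r →
      r ^ 2 / (μ (ball x r)).toReal * ∫ y in ball x r, V y ∂μ ≤
        4 * C_V * C₀ * (r / ρ) ^ (2 + Real.logb 2 C_V) := by
  intro r hr
  have hρr : 0 < r := hρ.trans_le hr
  have hratio1 : (1:ℝ) ≤ r / ρ := (one_le_div hρ).mpr hr
  have hratio0 : (0:ℝ) < r / ρ := lt_of_lt_of_le one_pos hratio1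
  set L := Real.logb 2 C_V with hLdef
  have hCV0 : (0:ℝ) < C_V := lt_of_lt_of_le one_pos hCV
  have hL0 : 0 ≤ L := Real.logb_nonneg one_lt_two hCV
  have hrpowk : 0 ≤ (r / ρ) ^ (2 + L) := Real.rpow_nonneg hratio0.le _
  have hRHS : 0 ≤ 4 * C_V * C₀ * (r / ρ) ^ (2 + L) :=
    mul_nonneg (mul_nonneg (by positivity) hC₀) hrpowk
  have hInonneg : ∀ s : ℝ, 0 ≤ ∫ y in ball x s, V y ∂μ := fun s =>
    integral_nonneg fun y => hV y
  set t := Real.logb 2 (r / ρ) with htdef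
  have ht0 : 0 ≤ t := Real.logb_nonneg one_lt_two hratio1
  set n := ⌈t⌉₊ with hndef
  have h2t : (2:ℝ) ^ t = r / ρ := Real.rpow_logb two_pos (by norm_num) hratio0
  have hrle : r ≤ 2 ^ n * ρ := by
    have h1 : r / ρ ≤ (2:ℝ) ^ (n:ℝ) := by
      rw [← h2t]
      exact Real.rpow_le_rpow_of_exponent_le one_le_two (Nat.le_ceil t)
    have h2 : (2:ℝ) ^ (n:ℝ) = (2:ℝ) ^ n := Real.rpow_natCast 2 n
    rw [h2] at h1
    calc r = (r / ρ) * ρ := by field_simp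
      _ ≤ (2:ℝ) ^ n * ρ := by nlinarith
  -- growth of the integral along doubling radii
  have hgrow : ∀ m : ℕ,
      ∫ y in ball x (2 ^ m * ρ), V y ∂μ ≤ C_V ^ m * ∫ y in ball x ρ, V y ∂μ := by
    intro m
    induction m with
    | zero => simp
    | succ m ih =>
      have h1 : ∫ y in ball x (2 ^ (m + 1) * ρ), V y ∂μ ≤
          C_V * ∫ y in ball x (2 ^ m * ρ), V y ∂μ := by
        have h := hVdoub x (2 ^ m * ρ) (by positivity)
        have heq : 2 * (2 ^ m * ρ) = 2 ^ (m + 1) * ρ := by ring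
        rwa [heq] at h
      calc ∫ y in ball x (2 ^ (m + 1) * ρ), V y ∂μ
          ≤ C_V * ∫ y in ball x (2 ^ m * ρ), V y ∂μ := h1
        _ ≤ C_V * (C_V ^ m * ∫ y in ball x ρ, V y ∂μ) :=
            mul_le_mul_of_nonneg_left ih hCV0.le
        _ = C_V ^ (m + 1) * ∫ y in ball x ρ, V y ∂μ := by ring
  have hIr : ∫ y in ball x r, V y ∂μ ≤ C_V ^ n * ∫ y in ball x ρ, V y ∂μ := by
    refine le_trans ?_ (hgrow n)
    refine setIntegral_mono_set (hVloc x (2 ^ n * ρ) (by positivity))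
      (Filter.Eventually.of_forall fun y => hV y) ?_
    exact Filter.Eventually.of_forall (ball_subset_ball hrle)
  have hCVn : (C_V : ℝ) ^ n ≤ C_V * (r / ρ) ^ L := by
    have h1 : (2:ℝ) ^ L = C_V := Real.rpow_logb two_pos (by norm_num) hCV0
    have hn1 : (n : ℝ) ≤ t + 1 := (Nat.ceil_lt_add_one ht0).le
    calc (C_V : ℝ) ^ n = ((2:ℝ) ^ L) ^ n := by rw [h1]
      _ = (2:ℝ) ^ (L * n) := by
          rw [← Real.rpow_natCast ((2:ℝ) ^ L) n, ← Real.rpow_mul (by norm_num)]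
      _ ≤ (2:ℝ) ^ (L * (t + 1)) := by
          refine Real.rpow_le_rpow_of_exponent_le one_le_two ?_
          nlinarith
      _ = (2:ℝ) ^ L * ((2:ℝ) ^ t) ^ L := by
          rw [← Real.rpow_mul (by norm_num : (0:ℝ) ≤ 2), ← Real.rpow_add two_pos]
          ring_nf
      _ = C_V * (r / ρ) ^ L := by rw [h1, h2t]
  by_cases hfin : μ (ball x r) = ⊤
  · rw [hfin]
    simp only [ENNReal.toReal_top, div_zero, zero_mul]
    exact hRHS
  · have hmono : (μ (ball x ρ)).toReal ≤ (μ (ball x r)).toReal :=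
      ENNReal.toReal_mono hfin (measure_mono (ball_subset_ball hr))
    by_cases hzero : (μ (ball x ρ)).toReal = 0
    · -- then μ (ball x ρ) = 0, so the ρ-integral is 0, hence the r-integral is 0
      have hμρ : μ (ball x ρ) = 0 := by
        have hρfin : μ (ball x ρ) ≠ ⊤ :=
          ne_top_of_le_ne_top hfin (measure_mono (ball_subset_ball hr))
        exact (ENNReal.toReal_eq_zero_iff _).mp hzero |>.resolve_right hρfin
      have hIρ : ∫ y in ball x ρ, V y ∂μ = 0 := by
        rw [Measure.restrict_eq_zero.mpr hμρ, integral_zero_measure]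
      have hIr0 : ∫ y in ball x r, V y ∂μ = 0 := by
        refine le_antisymm ?_ (hInonneg r)
        calc ∫ y in ball x r, V y ∂μ ≤ C_V ^ n * ∫ y in ball x ρ, V y ∂μ := hIr
          _ = 0 := by rw [hIρ, mul_zero]
      rw [hIr0, mul_zero]
      exact hRHS
    · have hAρ : 0 < (μ (ball x ρ)).toReal :=
        lt_of_le_of_ne ENNReal.toReal_nonneg (Ne.symm hzero)
      have hAr : 0 < (μ (ball x r)).toReal := lt_of_lt_of_le hAρ hmono
      have step1 : r ^ 2 / (μ (ball x r)).toReal * ∫ y in ball x r, V y ∂μ ≤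
          r ^ 2 / (μ (ball x ρ)).toReal * (C_V ^ n * ∫ y in ball x ρ, V y ∂μ) := by
        refine mul_le_mul ?_ hIr (hInonneg r) (by positivity)
        exact div_le_div_of_nonneg_left (by positivity) hAρ hmono
      have step2 : r ^ 2 / (μ (ball x ρ)).toReal * (C_V ^ n * ∫ y in ball x ρ, V y ∂μ)
          = (r / ρ) ^ 2 * C_V ^ n *
            (ρ ^ 2 / (μ (ball x ρ)).toReal * ∫ y in ball x ρ, V y ∂μ) := by
        field_simp
      have step3 : (r / ρ) ^ 2 * C_V ^ n *
          (ρ ^ 2 / (μ (ball x ρ)).toReal * ∫ y in ball x ρ, V y ∂μ) ≤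
          (r / ρ) ^ 2 * C_V ^ n * C₀ := by
        refine mul_le_mul_of_nonneg_left hmass (by positivity)
      have step4 : (r / ρ) ^ 2 * C_V ^ n * C₀ ≤ 4 * C_V * C₀ * (r / ρ) ^ (2 + L) := by
        have hsq : ((r / ρ) : ℝ) ^ (2:ℕ) = (r / ρ) ^ ((2:ℝ)) := by
          rw [← Real.rpow_natCast (r / ρ) 2]; norm_num
        have hadd : (r / ρ) ^ (2 + L) = (r / ρ) ^ ((2:ℝ)) * (r / ρ) ^ L :=
          Real.rpow_add hratio0 2 L
        have h1 : (r / ρ) ^ 2 * C_V ^ n * C₀ ≤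
            (r / ρ) ^ 2 * (C_V * (r / ρ) ^ L) * C₀ := by
          refine mul_le_mul_of_nonneg_right (mul_le_mul_of_nonneg_left hCVn (by positivity)) hC₀
        refine h1.trans ?_
        have h2 : (r / ρ) ^ 2 * (C_V * (r / ρ) ^ L) * C₀ =
            1 * C_V * C₀ * (r / ρ) ^ (2 + L) := by
          rw [hadd, ← hsq]; ring
        rw [h2]
        have h3 : (0:ℝ) ≤ C_V * C₀ * (r / ρ) ^ (2 + L) :=
          mul_nonneg (mul_nonneg hCV0.le hC₀) hrpowk
        nlinarith
      calc r ^ 2 / (μ (ball x r)).toReal * ∫ y in ball x r, V y ∂μ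
          ≤ r ^ 2 / (μ (ball x ρ)).toReal * (C_V ^ n * ∫ y in ball x ρ, V y ∂μ) := step1
        _ = (r / ρ) ^ 2 * C_V ^ n *
            (ρ ^ 2 / (μ (ball x ρ)).toReal * ∫ y in ball x ρ, V y ∂μ) := step2
        _ ≤ (r / ρ) ^ 2 * C_V ^ n * C₀ := step3
        _ ≤ 4 * C_V * C₀ * (r / ρ) ^ (2 + L) := step4
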